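/- Let k ≥ 2 be an integer, let a₁, b₁, c₁ ∈ ℂ with (a₁, b₁, c₁) ≠ (0, 0, 0), and let q, r, s, t, u ∈ ℂ with q ≠ 0 and ur − st ≠ 0. Let A be the 3×4 complex matrix with rows (0, a₁, 0, 0), (0, 0, 0, 0), (b₁, 0, 0, c₁), let G = [[q,0,0],[0,r,s],[0,t,u]], and let Q be the 4×4 matrix with rows (q^k,0,0,0), (0, rq^{k-1}, sq^{k-1}, 0), (0, tq^{k-1}, uq^{k-1}, 0), (0,0,0,(ur−st)q^{k-2}). Then the entries of G⁻¹·A·Q in positions (1,3), (2,1), and (2,4) all vanish if and only if s = 0. -/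

import Mathlib

theorem automorphism_preserves_degree_one_part_iff (k : ℕ) (hk : 2 ≤ k)
    (a₁ b₁ c₁ : ℂ) (h : (a₁, b₁, c₁) ≠ (0, 0, 0))
    (q r s t u : ℂ) (hq : q ≠ 0) (hdet : u * r - s * t ≠ 0) :
    let A : Matrix (Fin 3) (Fin 4) ℂ := !![0, a₁, 0, 0; 0, 0, 0, 0; b₁, 0, 0, c₁]
    let G : Matrix (Fin 3) (Fin 3) ℂ := !![q, 0, 0; 0, r, s; 0, t, u]
    let Q : Matrix (Fin 4) (Fin 4) ℂ := !![q ^ k, 0, 0, 0;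
      0, r * q ^ (k - 1), s * q ^ (k - 1), 0;
      0, t * q ^ (k - 1), u * q ^ (k - 1), 0;
      0, 0, 0, (u * r - s * t) * q ^ (k - 2)]
    ((G⁻¹ * A * Q) 0 2 = 0 ∧ (G⁻¹ * A * Q) 1 0 = 0 ∧ (G⁻¹ * A * Q) 1 3 = 0) ↔ s = 0 := by
  intro A G Q
  set D := u * r - s * t with hD
  have hGinv : G⁻¹ = !![q⁻¹, 0, 0; 0, u / D, -s / D; 0, -t / D, r / D] := by
    apply Matrix.inv_eq_right_inv
    ext i j
    fin_cases i <;> fin_cases j <;>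
      simp [G, Matrix.mul_apply, Fin.sum_univ_succ] <;> field_simp <;> ring
  rw [hGinv]
  have e1 : ((!![q⁻¹, 0, 0; 0, u / D, -s / D; 0, -t / D, r / D] : Matrix (Fin 3) (Fin 3) ℂ) * A * Q) 0 2
      = q⁻¹ * a₁ * (s * q ^ (k - 1)) := by
    simp [A, Q, Matrix.mul_apply, Fin.sum_univ_succ]
  have e2 : ((!![q⁻¹, 0, 0; 0, u / D, -s / D; 0, -t / D, r / D] : Matrix (Fin 3) (Fin 3) ℂ) * A * Q) 1 0
      = -s / D * b₁ * q ^ k := by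
    simp [A, Q, Matrix.mul_apply, Fin.sum_univ_succ]
  have e3 : ((!![q⁻¹, 0, 0; 0, u / D, -s / D; 0, -t / D, r / D] : Matrix (Fin 3) (Fin 3) ℂ) * A * Q) 1 3
      = -s / D * c₁ * (D * q ^ (k - 2)) := by
    simp [A, Q, Matrix.mul_apply, Fin.sum_univ_succ]
    exact Or.inl (Or.inl hD.symm)
  rw [e1, e2, e3]
  constructor
  · rintro ⟨h1, h2, h3⟩
    by_contra hs
    apply h
    have hqk : q ^ (k - 1) ≠ 0 := pow_ne_zero _ hq
    have hqk2 : q ^ (k - 2) ≠ 0 := pow_ne_zero _ hq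
    have hqkk : (q : ℂ) ^ k ≠ 0 := pow_ne_zero _ hq
    have hDne : D ≠ 0 := hdet
    simp only [mul_eq_zero, neg_div, neg_eq_zero, div_eq_zero_iff, inv_eq_zero,
      pow_eq_zero_iff, hq, hDne, hqk, hqk2, hqkk, false_or, or_false] at h1 h2 h3
    simp [h1.resolve_right hs, h2.resolve_left hs, h3.resolve_left hs]
  · intro hs
    simp [hs]
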